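/- (One-step decrease of the combined excitation Lyapunov function) Let x, x̃, x⁺, x̃⁺ ∈ ℝ^n, w, w̃ ∈ ℝ^q, p, p̃ ∈ ℝ^o, y, ỹ ∈ ℝ^r and matrices A, B, C, D, E, F, L, Y, Y⁺ be as follows: x⁺ − x̃⁺ = A(x−x̃) + B(w−w̃) + E(p−p̃), y − ỹ = C(x−x̃) + D(w−w̃) + F(p−p̃), Φ := A + LC with ΦᵀPΦ ⪯ ηP for a symmetric positive definite P and η ∈ [0,1), ‖C‖ ≤ C̄ (spectral norm), and Y⁺ = ΦY + E + LF. Let S ∈ ℝ^{o×o} be symmetric positive semidefinite, fix ε > 0, γ > 0, set μ := (1+ε)η + 3γC̄²/λ_min(P) and S⁺ := μS + ȲᵀȲ with Ȳ := CY + F. Define ζ := x − Yp, ζ̃ := x̃ − Yp̃, ζ⁺ := x⁺ − Y⁺p, ζ̃⁺ := x̃⁺ − Y⁺p̃, W := ‖ζ−ζ̃‖²_P + γ‖p−p̃‖²_S, and W⁺ := ‖ζ⁺−ζ̃⁺‖²_P + γ‖p−p̃‖²_{S⁺}. Then W⁺ ≤ μW + (2(1+ε)/ε)(‖(B+LD)(w−w̃)‖²_P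 + ‖L(y−ỹ)‖²_P) + 3γ(‖D(w−w̃)‖² + ‖y−ỹ‖²). -/

import Mathlib

open Matrix

/-- Weighted squared norm `‖v‖_Q² = vᵀ Q v`. -/
noncomputable def quad {ι : Type*} [Fintype ι] (Q : Matrix ι ι ℝ) (v : ι → ℝ) : ℝ :=
  v ⬝ᵥ Q.mulVec v

/-- Euclidean norm of a vector. -/
noncomputable def euclNorm {ι : Type*} [Fintype ι] (v : ι → ℝ) : ℝ :=
  Real.sqrt (v ⬝ᵥ v)

set_option maxHeartbeats 1000000

section helpers
variable {ι : Type*} [Fintype ι]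

lemma quad_nonneg {Q : Matrix ι ι ℝ} (hQ : Q.PosSemidef) (v : ι → ℝ) : 0 ≤ quad Q v := by
  simpa [quad] using hQ.dotProduct_mulVec_nonneg v

lemma transpose_eq_of_herm {Q : Matrix ι ι ℝ} (hQ : Q.IsHermitian) : Qᵀ = Q := by
  rw [← conjTranspose_eq_transpose_of_trivial]; exact hQ

lemma dot_symm {Q : Matrix ι ι ℝ} (hQ : Q.IsHermitian) (a b : ι → ℝ) :
    a ⬝ᵥ Q.mulVec b = b ⬝ᵥ Q.mulVec a := by
  rw [dotProduct_mulVec, ← mulVec_transpose, transpose_eq_of_herm hQ, dotProduct_comm]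

lemma quad_expand {Q : Matrix ι ι ℝ} (hQ : Q.IsHermitian) (a b : ι → ℝ) :
    quad Q (a + b) = quad Q a + 2 * (a ⬝ᵥ Q.mulVec b) + quad Q b := by
  simp [quad, mulVec_add, dotProduct_add, add_dotProduct, dot_symm hQ b a]; ring

lemma quad_sub_expand {Q : Matrix ι ι ℝ} (hQ : Q.IsHermitian) (a b : ι → ℝ) :
    quad Q (a - b) = quad Q a - 2 * (a ⬝ᵥ Q.mulVec b) + quad Q b := by
  simp [quad, mulVec_sub, dotProduct_sub, sub_dotProduct, dot_symm hQ b a]; ring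

lemma young_quad {Q : Matrix ι ι ℝ} (hQ : Q.PosSemidef) {ε : ℝ} (hε : 0 < ε) (a b : ι → ℝ) :
    quad Q (a + b) ≤ (1 + ε) * quad Q a + (1 + ε) / ε * quad Q b := by
  have h0 : 0 ≤ quad Q (ε • a - b) := quad_nonneg hQ _
  have hx : quad Q (ε • a - b) = ε ^ 2 * quad Q a - 2 * ε * (a ⬝ᵥ Q.mulVec b) + quad Q b := by
    simp [quad, mulVec_sub, mulVec_smul, dotProduct_sub, sub_dotProduct, dotProduct_smul,
      smul_dotProduct, smul_eq_mul, dot_symm hQ.1 b a]; ring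
  have key : 2 * (a ⬝ᵥ Q.mulVec b) ≤ ε * quad Q a + ε⁻¹ * quad Q b := by
    rw [← mul_le_mul_iff_right₀ hε]
    have h1 : ε * (ε * quad Q a + ε⁻¹ * quad Q b) = ε ^ 2 * quad Q a + quad Q b := by
      field_simp
    rw [h1]; nlinarith [h0, hx]
  have he := quad_expand hQ.1 a b
  have h2 : (1 + ε) / ε = 1 + ε⁻¹ := by field_simp; ring
  rw [h2]; linarith [key, he]

lemma quad_sub_le {Q : Matrix ι ι ℝ} (hQ : Q.PosSemidef) (a b : ι → ℝ) :
    quad Q (a - b) ≤ 2 * quad Q a + 2 * quad Q b := by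
  have h0 : 0 ≤ quad Q (a + b) := quad_nonneg hQ _
  have he := quad_expand hQ.1 a b
  have hs := quad_sub_expand hQ.1 a b
  linarith

lemma dot_self_nonneg (v : ι → ℝ) : 0 ≤ v ⬝ᵥ v :=
  Finset.sum_nonneg fun i _ => mul_self_nonneg _

lemma two_mul_dot_le (u v : ι → ℝ) : 2 * (u ⬝ᵥ v) ≤ u ⬝ᵥ u + v ⬝ᵥ v := by
  have h0 : 0 ≤ (u - v) ⬝ᵥ (u - v) := dot_self_nonneg _
  have he : (u - v) ⬝ᵥ (u - v) = u ⬝ᵥ u - 2 * (u ⬝ᵥ v) + v ⬝ᵥ v := by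
    simp [dotProduct_sub, sub_dotProduct, dotProduct_comm v u]; ring
  linarith

lemma dot3_le (a b c : ι → ℝ) :
    (a - b - c) ⬝ᵥ (a - b - c) ≤ 3 * (a ⬝ᵥ a + b ⬝ᵥ b + c ⬝ᵥ c) := by
  have he : (a - b - c) ⬝ᵥ (a - b - c) =
      a ⬝ᵥ a + b ⬝ᵥ b + c ⬝ᵥ c - 2 * (a ⬝ᵥ b) - 2 * (a ⬝ᵥ c) + 2 * (b ⬝ᵥ c) := by
    simp [dotProduct_sub, sub_dotProduct, dotProduct_comm b a, dotProduct_comm c a,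
      dotProduct_comm c b]; ring
  have h1 := two_mul_dot_le a (-b)
  have h2 := two_mul_dot_le a (-c)
  have h3 := two_mul_dot_le b c
  simp [dotProduct_neg, neg_dotProduct] at h1 h2
  linarith

end helpers

lemma posdef_lower {m : ℕ} {P : Matrix (Fin m) (Fin m) ℝ} (hP : P.PosDef) (hm : 0 < m) :
    ∃ c : ℝ, 0 < c ∧ ∀ v : Fin m → ℝ, c * (v ⬝ᵥ v) ≤ quad P v := by
  classical
  have hH := hP.1
  have hne : Nonempty (Fin m) := ⟨⟨0, hm⟩⟩
  obtain ⟨i0, -, hi0⟩ := Finset.exists_min_image Finset.univ hH.eigenvalues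
    ⟨Classical.arbitrary _, Finset.mem_univ _⟩
  refine ⟨hH.eigenvalues i0, hP.eigenvalues_pos i0, fun v => ?_⟩
  have hstar : star (Matrix.IsHermitian.eigenvectorUnitary hH : Matrix (Fin m) (Fin m) ℝ)
      = (Matrix.IsHermitian.eigenvectorUnitary hH : Matrix (Fin m) (Fin m) ℝ)ᵀ := by
    rw [Matrix.star_eq_conjTranspose, conjTranspose_eq_transpose_of_trivial]
  set U : Matrix (Fin m) (Fin m) ℝ := (Matrix.IsHermitian.eigenvectorUnitary hH :
    Matrix (Fin m) (Fin m) ℝ) with hUdef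
  have hUU : U * Uᵀ = 1 := by
    have h := (Matrix.mem_unitaryGroup_iff).mp (Matrix.IsHermitian.eigenvectorUnitary hH).2
    rwa [hstar] at h
  have hP' : P = U * diagonal hH.eigenvalues * Uᵀ := by
    have h := hH.spectral_theorem
    rw [Unitary.conjStarAlgAut_apply] at h
    rwa [hstar, RCLike.ofReal_real_eq_id, Function.id_comp] at h
  have key : ∀ t : Fin m → ℝ, v ⬝ᵥ (U *ᵥ t) = (Uᵀ *ᵥ v) ⬝ᵥ t := fun t => by
    rw [dotProduct_mulVec, ← mulVec_transpose]
  have hquad : quad P v = (Uᵀ *ᵥ v) ⬝ᵥ (diagonal hH.eigenvalues *ᵥ (Uᵀ *ᵥ v)) := by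
    rw [quad]
    conv_lhs => rw [hP']
    rw [← mulVec_mulVec, ← mulVec_mulVec, key]
  have hvv : v ⬝ᵥ v = (Uᵀ *ᵥ v) ⬝ᵥ (Uᵀ *ᵥ v) := by
    rw [← key (Uᵀ *ᵥ v), mulVec_mulVec, hUU, one_mulVec]
  rw [hquad, hvv]
  simp only [dotProduct, mulVec_diagonal, Finset.mul_sum]
  refine Finset.sum_le_sum fun i _ => ?_
  have h1 : hH.eigenvalues i0 * ((Uᵀ *ᵥ v) i * (Uᵀ *ᵥ v) i)
      ≤ hH.eigenvalues i * ((Uᵀ *ᵥ v) i * (Uᵀ *ᵥ v) i) :=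
    mul_le_mul_of_nonneg_right (hi0 i (Finset.mem_univ i)) (mul_self_nonneg _)
  nlinarith [h1]

/-- **One-step decrease of the combined excitation Lyapunov function**
`W := ‖ζ−ζ̃‖²_P + γ‖p−p̃‖²_S` along the transformed error dynamics:
with `Φ := A + LC`, `ΦᵀPΦ ⪯ ηP`, `‖C‖ ≤ C̄`, `Y⁺ = ΦY + E + LF`,
`μ := (1+ε)η + 3γC̄²/λ_min(P)`, `S⁺ := μS + ȲᵀȲ` where `Ȳ := CY + F`, it holds
`W⁺ ≤ μW + (2(1+ε)/ε)(‖(B+LD)(w−w̃)‖²_P + ‖L(y−ỹ)‖²_P) + 3γ(‖D(w−w̃)‖² + ‖y−ỹ‖²)`. -/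
theorem one_step_decrease_excitation_lyapunov
    {n q o r : ℕ}
    (x xt xp xtp : Fin n → ℝ) (w wt : Fin q → ℝ) (p pt : Fin o → ℝ)
    (y yt : Fin r → ℝ)
    (A : Matrix (Fin n) (Fin n) ℝ) (B : Matrix (Fin n) (Fin q) ℝ)
    (E : Matrix (Fin n) (Fin o) ℝ) (C : Matrix (Fin r) (Fin n) ℝ)
    (D : Matrix (Fin r) (Fin q) ℝ) (F : Matrix (Fin r) (Fin o) ℝ)
    (L : Matrix (Fin n) (Fin r) ℝ) (Y Yp : Matrix (Fin n) (Fin o) ℝ)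
    (P : Matrix (Fin n) (Fin n) ℝ) (hP : P.PosDef)
    (η : ℝ) (hη0 : 0 ≤ η) (hη1 : η < 1)
    (hx : xp - xtp = A.mulVec (x - xt) + B.mulVec (w - wt) + E.mulVec (p - pt))
    (hy : y - yt = C.mulVec (x - xt) + D.mulVec (w - wt) + F.mulVec (p - pt))
    (hΦ : ((η • P - (A + L * C)ᵀ * P * (A + L * C)) : Matrix (Fin n) (Fin n) ℝ).PosSemidef)
    (Cbar : ℝ) (hC : ∀ v : Fin n → ℝ, euclNorm (C.mulVec v) ≤ Cbar * euclNorm v)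
    (hY : Yp = (A + L * C) * Y + E + L * F)
    (S : Matrix (Fin o) (Fin o) ℝ) (hS : S.PosSemidef)
    (ε γ : ℝ) (hε : 0 < ε) (hγ : 0 < γ)
    (lminP : ℝ)
    (hlmin : IsGreatest {l : ℝ | ∀ v : Fin n → ℝ, l * (v ⬝ᵥ v) ≤ quad P v} lminP)
    (μ : ℝ) (hμ : μ = (1 + ε) * η + 3 * γ * Cbar ^ 2 / lminP)
    (Sp : Matrix (Fin o) (Fin o) ℝ)
    (hSp : Sp = μ • S + (C * Y + F)ᵀ * (C * Y + F)) :
    quad P ((xp - Yp.mulVec p) - (xtp - Yp.mulVec pt)) + γ * quad Sp (p - pt)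
      ≤ μ * (quad P ((x - Y.mulVec p) - (xt - Y.mulVec pt)) + γ * quad S (p - pt))
        + (2 * (1 + ε) / ε) *
            (quad P ((B + L * D).mulVec (w - wt)) + quad P (L.mulVec (y - yt)))
        + 3 * γ * ((D.mulVec (w - wt)) ⬝ᵥ (D.mulVec (w - wt)) + (y - yt) ⬝ᵥ (y - yt)) := by
  classical
  have hPsd := hP.posSemidef
  set z : Fin n → ℝ := (x - Y.mulVec p) - (xt - Y.mulVec pt) with hzdef
  set u : Fin n → ℝ := (B + L * D).mulVec (w - wt) with hudef
  set vv : Fin n → ℝ := L.mulVec (y - yt) with hvvdef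
  -- key dynamics identity
  have hzp : (xp - Yp.mulVec p) - (xtp - Yp.mulVec pt) = (A + L * C).mulVec z + (u - vv) := by
    have hl : (xp - Yp.mulVec p) - (xtp - Yp.mulVec pt)
        = (xp - xtp) - Yp.mulVec (p - pt) := by
      rw [mulVec_sub]; abel
    rw [hl, hx, hY, hzdef, hudef, hvvdef, hy]
    simp only [Matrix.add_mulVec, Matrix.mulVec_add, Matrix.mulVec_sub, ← Matrix.mulVec_mulVec]
    abel
  -- contraction step
  have h3 : quad P ((A + L * C).mulVec z) ≤ η * quad P z := by
    have h0 := hΦ.dotProduct_mulVec_nonneg z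
    rw [star_trivial] at h0
    have hexp : z ⬝ᵥ ((η • P - (A + L * C)ᵀ * P * (A + L * C)).mulVec z)
        = η * quad P z - quad P ((A + L * C).mulVec z) := by
      rw [Matrix.sub_mulVec, dotProduct_sub, smul_mulVec, dotProduct_smul, smul_eq_mul]
      have : z ⬝ᵥ ((A + L * C)ᵀ * P * (A + L * C)).mulVec z
          = quad P ((A + L * C).mulVec z) := by
        rw [Matrix.mul_assoc, ← Matrix.mulVec_mulVec, dotProduct_mulVec, vecMul_transpose,
          ← Matrix.mulVec_mulVec, quad]
      rw [this]; rfl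
    rw [hexp] at h0
    linarith
  -- Young steps
  have h1 : quad P ((xp - Yp.mulVec p) - (xtp - Yp.mulVec pt))
      ≤ (1 + ε) * quad P ((A + L * C).mulVec z) + (1 + ε) / ε * quad P (u - vv) := by
    rw [hzp]; exact young_quad hPsd hε _ _
  have h2 : quad P (u - vv) ≤ 2 * quad P u + 2 * quad P vv := quad_sub_le hPsd _ _
  -- Sp expansion
  have h4 : quad Sp (p - pt) = μ * quad S (p - pt)
      + ((C * Y + F).mulVec (p - pt)) ⬝ᵥ ((C * Y + F).mulVec (p - pt)) := by
    have hsecond : (p - pt) ⬝ᵥ (((C * Y + F)ᵀ * (C * Y + F)).mulVec (p - pt))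
        = ((C * Y + F).mulVec (p - pt)) ⬝ᵥ ((C * Y + F).mulVec (p - pt)) := by
      rw [← Matrix.mulVec_mulVec, dotProduct_mulVec, vecMul_transpose]
    simp only [quad, hSp, Matrix.add_mulVec, dotProduct_add, smul_mulVec,
      dotProduct_smul, smul_eq_mul, hsecond]
  -- Ybar identity
  have h5 : (C * Y + F).mulVec (p - pt)
      = (y - yt) - D.mulVec (w - wt) - C.mulVec z := by
    rw [hy, hzdef]
    simp only [Matrix.add_mulVec, Matrix.mulVec_add, Matrix.mulVec_sub, ← Matrix.mulVec_mulVec]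
    abel
  have h6 : ((C * Y + F).mulVec (p - pt)) ⬝ᵥ ((C * Y + F).mulVec (p - pt))
      ≤ 3 * ((y - yt) ⬝ᵥ (y - yt) + (D.mulVec (w - wt)) ⬝ᵥ (D.mulVec (w - wt))
          + (C.mulVec z) ⬝ᵥ (C.mulVec z)) := by
    rw [h5]; exact dot3_le _ _ _
  -- norm bound on C
  have h7 : (C.mulVec z) ⬝ᵥ (C.mulVec z) ≤ Cbar ^ 2 * (z ⬝ᵥ z) := by
    have h := hC z
    have h0 : 0 ≤ euclNorm (C.mulVec z) := Real.sqrt_nonneg _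
    have hcz : euclNorm (C.mulVec z) * euclNorm (C.mulVec z) = (C.mulVec z) ⬝ᵥ (C.mulVec z) :=
      Real.mul_self_sqrt (dot_self_nonneg _)
    have hz2 : euclNorm z * euclNorm z = z ⬝ᵥ z := Real.mul_self_sqrt (dot_self_nonneg _)
    have := mul_self_le_mul_self h0 h
    nlinarith [this, hcz, hz2]
  -- positivity of lminP
  have hlp : 0 < lminP := by
    rcases Nat.eq_zero_or_pos n with h0 | hpos
    · exfalso
      have hmem : (lminP + 1) ∈ {l : ℝ | ∀ v : Fin n → ℝ, l * (v ⬝ᵥ v) ≤ quad P v} := by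
        intro v
        subst h0
        simp [quad, dotProduct]
      linarith [hlmin.2 hmem]
    · obtain ⟨c, hc, hcall⟩ := posdef_lower hP hpos
      exact hc.trans_le (hlmin.2 hcall)
  have h9 : z ⬝ᵥ z ≤ quad P z / lminP := by
    rw [le_div_iff₀ hlp]
    have := hlmin.1 z
    linarith [this]
  have hA : 3 * γ * Cbar ^ 2 * (z ⬝ᵥ z) ≤ 3 * γ * Cbar ^ 2 / lminP * quad P z := by
    have hnn : (0 : ℝ) ≤ 3 * γ * Cbar ^ 2 := by positivity
    have h := mul_le_mul_of_nonneg_left h9 hnn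
    have heq : 3 * γ * Cbar ^ 2 * (quad P z / lminP) = 3 * γ * Cbar ^ 2 / lminP * quad P z := by
      ring
    linarith [h, heq.le, heq.ge]
  -- assemble
  have h3' := mul_le_mul_of_nonneg_left h3 (by positivity : (0:ℝ) ≤ 1 + ε)
  have h2' := mul_le_mul_of_nonneg_left h2 (by positivity : (0:ℝ) ≤ (1 + ε) / ε)
  have h6' := mul_le_mul_of_nonneg_left h6 hγ.le
  have h7' := mul_le_mul_of_nonneg_left h7 (by positivity : (0:ℝ) ≤ 3 * γ)
  rw [hμ] at h4 ⊢
  have h4' : γ * quad Sp (p - pt) = γ * (((1 + ε) * η + 3 * γ * Cbar ^ 2 / lminP) * quad S (p - pt)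
      + ((C * Y + F).mulVec (p - pt)) ⬝ᵥ ((C * Y + F).mulVec (p - pt))) := by rw [h4]
  have e1 : 2 * (1 + ε) / ε * (quad P u + quad P vv)
      = (1 + ε) / ε * (2 * quad P u + 2 * quad P vv) := by ring
  have e2 : ((1 + ε) * η + 3 * γ * Cbar ^ 2 / lminP) * (quad P z + γ * quad S (p - pt))
      = (1 + ε) * (η * quad P z) + 3 * γ * Cbar ^ 2 / lminP * quad P z
        + γ * (((1 + ε) * η + 3 * γ * Cbar ^ 2 / lminP) * quad S (p - pt)) := by ring
  rw [e1, e2]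
  linarith [h1, h2', h3', h4'.le, h4'.ge, h6', h7', hA]
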